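/- arXiv:2507.11337 — 2 statements merged into one kernel-verified Lean document; each statement's English description precedes it below -/
import Mathlib

section
/- The canonical homomorphism α : K₁ᶠ(S) → K₁(S), [f] ↦ [f], from the K₁-group defined using finitely generated free modules to the K₁-group defined using finitely generated projective modules, is an isomorphism of abelian groups. -/
/-!
STATEMENT 2: The canonical homomorphism `α : K₁ᶠ(S) → K₁(S)`, `[f] ↦ [f]`, from the
`K₁`-group defined via finitely generated free modules to the one defined via finitely
generated projective modules, is an isomorphism of abelian groups.
-/

universe u

/-- A bundled finitely generated projective module over `S`. -/
structure FGProj (S : Type u) [Ring S] where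
  carrier : Type u
  [addCommGroup : AddCommGroup carrier]
  [module : Module S carrier]
  fg : Module.Finite S carrier
  proj : Module.Projective S carrier

attribute [instance] FGProj.addCommGroup FGProj.module

/-- A bundled finitely generated free module over `S`. -/
structure FGFree (S : Type u) [Ring S] where
  carrier : Type u
  [addCommGroup : AddCommGroup carrier]
  [module : Module S carrier]
  fg : Module.Finite S carrier
  free : Module.Free S carrier

attribute [instance] FGFree.addCommGroup FGFree.module

/-- A finitely generated free module is in particular finitely generated projective. -/
def FGFree.toFGProj {S : Type u} [Ring S] (M : FGFree S) : FGProj S :=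
  { carrier := M.carrier, fg := M.fg,
    proj := @Module.Projective.of_free S _ M.carrier _ _ M.free }

section K1

variable (S : Type u) [Ring S]

/-- A generator of `K₁(S)`: an automorphism of a finitely generated projective module. -/
structure K1Gen (S : Type u) [Ring S] where
  base : FGProj S
  auto : base.carrier ≃ₗ[S] base.carrier

/-- A generator of `K₁ᶠ(S)`: an automorphism of a finitely generated free module. -/
structure K1FGen (S : Type u) [Ring S] where
  base : FGFree S
  auto : base.carrier ≃ₗ[S] base.carrier

/-- The relations defining `K₁(S)`: additivity along short exact sequences, and the
composition formula. -/
def K1Rels : Set (FreeAbelianGroup (K1Gen S)) :=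
  {x | (∃ (M₀ M₁ M₂ : FGProj S) (f₀ : M₀.carrier ≃ₗ[S] M₀.carrier)
          (f₁ : M₁.carrier ≃ₗ[S] M₁.carrier) (f₂ : M₂.carrier ≃ₗ[S] M₂.carrier)
          (i : M₀.carrier →ₗ[S] M₁.carrier) (p : M₁.carrier →ₗ[S] M₂.carrier),
        Function.Injective i ∧ Function.Surjective p ∧
        LinearMap.range i = LinearMap.ker p ∧
        (∀ m, f₁ (i m) = i (f₀ m)) ∧ (∀ m, p (f₁ m) = f₂ (p m)) ∧
        x = FreeAbelianGroup.of ⟨M₁, f₁⟩ - FreeAbelianGroup.of ⟨M₀, f₀⟩ -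
              FreeAbelianGroup.of ⟨M₂, f₂⟩) ∨
      (∃ (M : FGProj S) (f g : M.carrier ≃ₗ[S] M.carrier),
        x = FreeAbelianGroup.of ⟨M, f.trans g⟩ - FreeAbelianGroup.of ⟨M, f⟩ -
              FreeAbelianGroup.of ⟨M, g⟩)}

/-- The relations defining `K₁ᶠ(S)`. -/
def K1FRels : Set (FreeAbelianGroup (K1FGen S)) :=
  {x | (∃ (M₀ M₁ M₂ : FGFree S) (f₀ : M₀.carrier ≃ₗ[S] M₀.carrier)
          (f₁ : M₁.carrier ≃ₗ[S] M₁.carrier) (f₂ : M₂.carrier ≃ₗ[S] M₂.carrier)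
          (i : M₀.carrier →ₗ[S] M₁.carrier) (p : M₁.carrier →ₗ[S] M₂.carrier),
        Function.Injective i ∧ Function.Surjective p ∧
        LinearMap.range i = LinearMap.ker p ∧
        (∀ m, f₁ (i m) = i (f₀ m)) ∧ (∀ m, p (f₁ m) = f₂ (p m)) ∧
        x = FreeAbelianGroup.of ⟨M₁, f₁⟩ - FreeAbelianGroup.of ⟨M₀, f₀⟩ -
              FreeAbelianGroup.of ⟨M₂, f₂⟩) ∨
      (∃ (M : FGFree S) (f g : M.carrier ≃ₗ[S] M.carrier),
        x = FreeAbelianGroup.of ⟨M, f.trans g⟩ - FreeAbelianGroup.of ⟨M, f⟩ -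
              FreeAbelianGroup.of ⟨M, g⟩)}

/-- `K₁(S)`. -/
def K1 : Type (u + 1) := FreeAbelianGroup (K1Gen S) ⧸ AddSubgroup.closure (K1Rels S)

instance : AddCommGroup (K1 S) :=
  inferInstanceAs (AddCommGroup (FreeAbelianGroup (K1Gen S) ⧸ AddSubgroup.closure (K1Rels S)))

/-- `K₁ᶠ(S)`. -/
def K1F : Type (u + 1) := FreeAbelianGroup (K1FGen S) ⧸ AddSubgroup.closure (K1FRels S)

instance : AddCommGroup (K1F S) :=
  inferInstanceAs (AddCommGroup (FreeAbelianGroup (K1FGen S) ⧸ AddSubgroup.closure (K1FRels S)))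

/-- The class `[f] ∈ K₁(S)`. -/
def K1.cls (g : K1Gen S) : K1 S := QuotientAddGroup.mk (FreeAbelianGroup.of g)

/-- The class `[f] ∈ K₁ᶠ(S)`. -/
def K1F.cls (g : K1FGen S) : K1F S := QuotientAddGroup.mk (FreeAbelianGroup.of g)

end K1

namespace K1Proof

attribute [instance] FGProj.fg FGProj.proj FGFree.fg FGFree.free

variable {S : Type u} [Ring S]

/-- The zero module as an FGFree. -/
def punitFree (S : Type u) [Ring S] : FGFree S :=
  { carrier := PUnit, fg := inferInstance, free := inferInstance }

/-- The zero module as an FGProj. -/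
def punitProj (S : Type u) [Ring S] : FGProj S :=
  { carrier := PUnit, fg := inferInstance, proj := Module.Projective.of_free }

/-- Product of bundled free modules. -/
def prodF (M N : FGFree S) : FGFree S :=
  { carrier := M.carrier × N.carrier, fg := inferInstance, free := inferInstance }

/-- Product of bundled projective modules. -/
def prodP (M N : FGProj S) : FGProj S :=
  { carrier := M.carrier × N.carrier, fg := inferInstance, proj := inferInstance }

/-- Conjugated automorphism. -/
def conjAuto {M N : Type u} [AddCommGroup M] [AddCommGroup N] [Module S M] [Module S N]
    (e : M ≃ₗ[S] N) (f : M ≃ₗ[S] M) : N ≃ₗ[S] N :=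
  (e.symm.trans f).trans e

@[simp] theorem conjAuto_apply {M N : Type u} [AddCommGroup M] [AddCommGroup N] [Module S M]
    [Module S N] (e : M ≃ₗ[S] N) (f : M ≃ₗ[S] M) (x : N) :
    conjAuto e f x = e (f (e.symm x)) := rfl

section K1lemmas
variable (S)

theorem K1.rel_zero {x : FreeAbelianGroup (K1Gen S)} (h : x ∈ K1Rels S) :
    (QuotientAddGroup.mk x : K1 S) = 0 :=
  (QuotientAddGroup.eq_zero_iff x).2 (AddSubgroup.subset_closure h)

theorem K1F.rel_zero {x : FreeAbelianGroup (K1FGen S)} (h : x ∈ K1FRels S) :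
    (QuotientAddGroup.mk x : K1F S) = 0 :=
  (QuotientAddGroup.eq_zero_iff x).2 (AddSubgroup.subset_closure h)

theorem K1.ses (M₀ M₁ M₂ : FGProj S) (f₀ : M₀.carrier ≃ₗ[S] M₀.carrier)
    (f₁ : M₁.carrier ≃ₗ[S] M₁.carrier) (f₂ : M₂.carrier ≃ₗ[S] M₂.carrier)
    (i : M₀.carrier →ₗ[S] M₁.carrier) (p : M₁.carrier →ₗ[S] M₂.carrier)
    (hi : Function.Injective i) (hp : Function.Surjective p)
    (hr : LinearMap.range i = LinearMap.ker p)
    (h₀ : ∀ m, f₁ (i m) = i (f₀ m)) (h₂ : ∀ m, p (f₁ m) = f₂ (p m)) :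
    K1.cls S ⟨M₁, f₁⟩ = K1.cls S ⟨M₀, f₀⟩ + K1.cls S ⟨M₂, f₂⟩ := by
  have h := K1.rel_zero S (Or.inl ⟨M₀, M₁, M₂, f₀, f₁, f₂, i, p, hi, hp, hr, h₀, h₂, rfl⟩)
  rw [QuotientAddGroup.mk_sub, QuotientAddGroup.mk_sub, sub_sub, sub_eq_zero] at h
  exact h

theorem K1F.ses (M₀ M₁ M₂ : FGFree S) (f₀ : M₀.carrier ≃ₗ[S] M₀.carrier)
    (f₁ : M₁.carrier ≃ₗ[S] M₁.carrier) (f₂ : M₂.carrier ≃ₗ[S] M₂.carrier)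
    (i : M₀.carrier →ₗ[S] M₁.carrier) (p : M₁.carrier →ₗ[S] M₂.carrier)
    (hi : Function.Injective i) (hp : Function.Surjective p)
    (hr : LinearMap.range i = LinearMap.ker p)
    (h₀ : ∀ m, f₁ (i m) = i (f₀ m)) (h₂ : ∀ m, p (f₁ m) = f₂ (p m)) :
    K1F.cls S ⟨M₁, f₁⟩ = K1F.cls S ⟨M₀, f₀⟩ + K1F.cls S ⟨M₂, f₂⟩ := by
  have h := K1F.rel_zero S (Or.inl ⟨M₀, M₁, M₂, f₀, f₁, f₂, i, p, hi, hp, hr, h₀, h₂, rfl⟩)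
  rw [QuotientAddGroup.mk_sub, QuotientAddGroup.mk_sub, sub_sub, sub_eq_zero] at h
  exact h

theorem K1.comp (M : FGProj S) (f g : M.carrier ≃ₗ[S] M.carrier) :
    K1.cls S ⟨M, f.trans g⟩ = K1.cls S ⟨M, f⟩ + K1.cls S ⟨M, g⟩ := by
  have h := K1.rel_zero S (x := (FreeAbelianGroup.of ⟨M, f.trans g⟩ -
    FreeAbelianGroup.of ⟨M, f⟩ - FreeAbelianGroup.of ⟨M, g⟩)) (Or.inr ⟨M, f, g, rfl⟩)
  rw [QuotientAddGroup.mk_sub, QuotientAddGroup.mk_sub, sub_sub, sub_eq_zero] at h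
  exact h

theorem K1F.comp (M : FGFree S) (f g : M.carrier ≃ₗ[S] M.carrier) :
    K1F.cls S ⟨M, f.trans g⟩ = K1F.cls S ⟨M, f⟩ + K1F.cls S ⟨M, g⟩ := by
  have h := K1F.rel_zero S (x := (FreeAbelianGroup.of ⟨M, f.trans g⟩ -
    FreeAbelianGroup.of ⟨M, f⟩ - FreeAbelianGroup.of ⟨M, g⟩)) (Or.inr ⟨M, f, g, rfl⟩)
  rw [QuotientAddGroup.mk_sub, QuotientAddGroup.mk_sub, sub_sub, sub_eq_zero] at h
  exact h

theorem K1.id_zero (M : FGProj S) :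
    K1.cls S ⟨M, LinearEquiv.refl S M.carrier⟩ = 0 := by
  have h := K1.comp S M (LinearEquiv.refl S M.carrier) (LinearEquiv.refl S M.carrier)
  rw [LinearEquiv.trans_refl] at h
  exact (left_eq_add.1 h)

theorem K1F.id_zero (M : FGFree S) :
    K1F.cls S ⟨M, LinearEquiv.refl S M.carrier⟩ = 0 := by
  have h := K1F.comp S M (LinearEquiv.refl S M.carrier) (LinearEquiv.refl S M.carrier)
  rw [LinearEquiv.trans_refl] at h
  exact (left_eq_add.1 h)

theorem K1.conj (M N : FGProj S) (u : M.carrier ≃ₗ[S] N.carrier)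
    (g : M.carrier ≃ₗ[S] M.carrier) (g' : N.carrier ≃ₗ[S] N.carrier)
    (h : ∀ m, g' (u m) = u (g m)) : K1.cls S ⟨N, g'⟩ = K1.cls S ⟨M, g⟩ := by
  haveI : Subsingleton (punitProj S).carrier := inferInstanceAs (Subsingleton PUnit)
  have hs := K1.ses S M N (punitProj S) g g' (LinearEquiv.refl S _)
    (u : M.carrier →ₗ[S] N.carrier) 0 u.injective
    (fun x => ⟨0, Subsingleton.elim _ _⟩)
    (by rw [LinearMap.ker_zero, LinearEquiv.range])
    (fun m => h m) (fun m => Subsingleton.elim _ _)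
  rw [hs, K1.id_zero, add_zero]

theorem K1F.conj (M N : FGFree S) (u : M.carrier ≃ₗ[S] N.carrier)
    (g : M.carrier ≃ₗ[S] M.carrier) (g' : N.carrier ≃ₗ[S] N.carrier)
    (h : ∀ m, g' (u m) = u (g m)) : K1F.cls S ⟨N, g'⟩ = K1F.cls S ⟨M, g⟩ := by
  haveI : Subsingleton (punitFree S).carrier := inferInstanceAs (Subsingleton PUnit)
  have hs := K1F.ses S M N (punitFree S) g g' (LinearEquiv.refl S _)
    (u : M.carrier →ₗ[S] N.carrier) 0 u.injective
    (fun x => ⟨0, Subsingleton.elim _ _⟩)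
    (by rw [LinearMap.ker_zero, LinearEquiv.range])
    (fun m => h m) (fun m => Subsingleton.elim _ _)
  rw [hs, K1F.id_zero, add_zero]

theorem K1.stab (M N : FGProj S) (g : M.carrier ≃ₗ[S] M.carrier) :
    K1.cls S ⟨prodP M N, g.prodCongr (LinearEquiv.refl S N.carrier)⟩ = K1.cls S ⟨M, g⟩ := by
  have hs := K1.ses S M (prodP M N) N g (g.prodCongr (LinearEquiv.refl S N.carrier))
    (LinearEquiv.refl S _) (LinearMap.inl S M.carrier N.carrier)
    (LinearMap.snd S M.carrier N.carrier) LinearMap.inl_injective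
    (fun y => ⟨(0, y), rfl⟩) (LinearMap.range_inl S _ _)
    (fun _ => rfl) (fun _ => rfl)
  rw [hs, K1.id_zero, add_zero]

theorem K1F.stab (M N : FGFree S) (g : M.carrier ≃ₗ[S] M.carrier) :
    K1F.cls S ⟨prodF M N, g.prodCongr (LinearEquiv.refl S N.carrier)⟩ = K1F.cls S ⟨M, g⟩ := by
  have hs := K1F.ses S M (prodF M N) N g (g.prodCongr (LinearEquiv.refl S N.carrier))
    (LinearEquiv.refl S _) (LinearMap.inl S M.carrier N.carrier)
    (LinearMap.snd S M.carrier N.carrier) LinearMap.inl_injective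
    (fun y => ⟨(0, y), rfl⟩) (LinearMap.range_inl S _ _)
    (fun _ => rfl) (fun _ => rfl)
  rw [hs, K1F.id_zero, add_zero]

end K1lemmas

end K1Proof
namespace K1Proof
variable {S : Type u} [Ring S]

/-- A free complement presentation of a f.g. projective module. -/
structure Compl (P : FGProj S) where
  Q : FGProj S
  F : FGFree S
  e : (P.carrier × Q.carrier) ≃ₗ[S] F.carrier

theorem compl_nonempty (P : FGProj S) : Nonempty (Compl P) := by
  obtain ⟨n, π, hπ⟩ := Module.Finite.exists_fin' S P.carrier
  obtain ⟨s, hs⟩ := Module.projective_lifting_property π LinearMap.id hπ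
  have hsa : ∀ x, π (s x) = x := fun x => congrArg (fun f => f x) (congrArg DFunLike.coe hs)
  set K := LinearMap.ker π with hK
  have hρ0 : ∀ v : Fin n → S, π (v - s (π v)) = 0 := by
    intro v; rw [map_sub, hsa]; exact sub_self _
  let ρ : (Fin n → S) →ₗ[S] K :=
    LinearMap.codRestrict K (LinearMap.id - s ∘ₗ π) (fun v => by
      simp only [hK, LinearMap.mem_ker, LinearMap.sub_apply, LinearMap.id_apply,
        LinearMap.comp_apply]
      exact hρ0 v)
  have hρ : ∀ k : K, ρ (k : Fin n → S) = k := by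
    intro k
    apply Subtype.ext
    have hk : π (k : Fin n → S) = 0 := k.2
    simp [ρ, hk]
  have hρs : Function.Surjective ρ := fun k => ⟨k, hρ k⟩
  let fwd : (P.carrier × K) →ₗ[S] (Fin n → S) :=
    (s ∘ₗ LinearMap.fst S P.carrier K) + (K.subtype ∘ₗ LinearMap.snd S P.carrier K)
  let inv : (Fin n → S) →ₗ[S] (P.carrier × K) := LinearMap.prod π ρ
  have h1 : fwd ∘ₗ inv = LinearMap.id := by
    apply LinearMap.ext; intro v
    simp [fwd, inv, ρ]
  have h2 : inv ∘ₗ fwd = LinearMap.id := by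
    apply LinearMap.ext; intro z
    obtain ⟨x, k⟩ := z
    have hk : π (k : Fin n → S) = 0 := k.2
    apply Prod.ext
    · simp [fwd, inv, hsa, hk]
    · apply Subtype.ext
      simp [fwd, inv, ρ, hsa, hk]
  refine ⟨⟨⟨K, Module.Finite.of_surjective ρ hρs,
      Module.Projective.of_split K.subtype ρ (by apply LinearMap.ext; intro k; exact hρ k)⟩,
    ⟨Fin n → S, inferInstance, inferInstance⟩,
    LinearEquiv.ofLinear fwd inv h1 h2⟩⟩

end K1Proof
namespace K1Proof
variable {S : Type u} [Ring S]

/-- The value of β on a generator, computed with a chosen complement. -/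
def bAux (g : K1Gen S) (c : Compl g.base) : K1F S :=
  K1F.cls S ⟨c.F, conjAuto c.e (g.auto.prodCongr (LinearEquiv.refl S c.Q.carrier))⟩

theorem bAux_indep (g : K1Gen S) (c c' : Compl g.base) : bAux g c = bAux g c' := by
  set f := g.auto with hf
  set A := conjAuto c.e (f.prodCongr (LinearEquiv.refl S c.Q.carrier)) with hA
  set A' := conjAuto c'.e (f.prodCongr (LinearEquiv.refl S c'.Q.carrier)) with hA'
  let u : (c.F.carrier × c'.F.carrier) ≃ₗ[S] (c'.F.carrier × c.F.carrier) :=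
    (c.e.symm.prodCongr c'.e.symm).trans
      ((LinearEquiv.prodProdProdComm S _ _ _ _).trans
        (((LinearEquiv.refl S _).prodCongr (LinearEquiv.prodComm S c.Q.carrier c'.Q.carrier)).trans
          ((LinearEquiv.prodProdProdComm S _ _ _ _).trans (c'.e.prodCongr c.e))))
  have key : ∀ z, (A'.prodCongr (LinearEquiv.refl S c.F.carrier)) (u z)
      = u ((A.prodCongr (LinearEquiv.refl S c'.F.carrier)) z) := by
    intro ⟨x, y⟩
    simp [u, hA, hA', LinearEquiv.prodProdProdComm_apply]
  calc bAux g c = K1F.cls S ⟨prodF c.F c'.F, A.prodCongr (LinearEquiv.refl S c'.F.carrier)⟩ :=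
        (K1F.stab S c.F c'.F A).symm
    _ = K1F.cls S ⟨prodF c'.F c.F, A'.prodCongr (LinearEquiv.refl S c.F.carrier)⟩ :=
        (K1F.conj S (prodF c.F c'.F) (prodF c'.F c.F) u _ _ key).symm
    _ = bAux g c' := K1F.stab S c'.F c.F A'

end K1Proof
namespace K1Proof
variable {S : Type u} [Ring S]

/-- The value of β on a generator. -/
noncomputable def bGen (g : K1Gen S) : K1F S :=
  bAux g (Classical.choice (compl_nonempty g.base))

theorem bGen_eq (g : K1Gen S) (c : Compl g.base) : bGen g = bAux g c :=
  bAux_indep g _ c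

theorem bGen_comp (M : FGProj S) (f g : M.carrier ≃ₗ[S] M.carrier) :
    bGen ⟨M, f.trans g⟩ = bGen ⟨M, f⟩ + bGen ⟨M, g⟩ := by
  obtain ⟨c⟩ := compl_nonempty M
  rw [bGen_eq ⟨M, f.trans g⟩ c, bGen_eq ⟨M, f⟩ c, bGen_eq ⟨M, g⟩ c]
  show K1F.cls S ⟨c.F, conjAuto c.e ((f.trans g).prodCongr (LinearEquiv.refl S c.Q.carrier))⟩ = _
  have heq : conjAuto c.e ((f.trans g).prodCongr (LinearEquiv.refl S c.Q.carrier)) =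
      (conjAuto c.e (f.prodCongr (LinearEquiv.refl S c.Q.carrier))).trans
        (conjAuto c.e (g.prodCongr (LinearEquiv.refl S c.Q.carrier))) := by
    apply LinearEquiv.ext; intro z; simp
  rw [heq]
  exact K1F.comp S c.F _ _

theorem bGen_ses (M₀ M₁ M₂ : FGProj S) (f₀ : M₀.carrier ≃ₗ[S] M₀.carrier)
    (f₁ : M₁.carrier ≃ₗ[S] M₁.carrier) (f₂ : M₂.carrier ≃ₗ[S] M₂.carrier)
    (i : M₀.carrier →ₗ[S] M₁.carrier) (p : M₁.carrier →ₗ[S] M₂.carrier)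
    (hi : Function.Injective i) (hp : Function.Surjective p)
    (hr : LinearMap.range i = LinearMap.ker p)
    (h₀ : ∀ m, f₁ (i m) = i (f₀ m)) (h₂ : ∀ m, p (f₁ m) = f₂ (p m)) :
    bGen ⟨M₁, f₁⟩ = bGen ⟨M₀, f₀⟩ + bGen ⟨M₂, f₂⟩ := by
  obtain ⟨c₀⟩ := compl_nonempty M₀
  obtain ⟨c₂⟩ := compl_nonempty M₂
  -- split the sequence
  obtain ⟨s, hs⟩ := Module.projective_lifting_property p LinearMap.id hp
  have hsa : ∀ x, p (s x) = x := fun x => congrArg (fun f => f x) (congrArg DFunLike.coe hs)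
  have hpi : ∀ x, p (i x) = 0 := by
    intro x
    have : i x ∈ LinearMap.ker p := hr ▸ LinearMap.mem_range_self i x
    exact this
  let φ₀ : (M₀.carrier × M₂.carrier) →ₗ[S] M₁.carrier :=
    (i ∘ₗ LinearMap.fst S M₀.carrier M₂.carrier) + (s ∘ₗ LinearMap.snd S M₀.carrier M₂.carrier)
  have hφ₀ : ∀ z : M₀.carrier × M₂.carrier, φ₀ z = i z.1 + s z.2 := fun z => rfl
  have hpφ : ∀ z, p (φ₀ z) = z.2 := by
    intro z; rw [hφ₀, map_add, hpi, hsa, zero_add]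
  have hbij : Function.Bijective φ₀ := by
    constructor
    · intro z w hzw
      have h2 : z.2 = w.2 := by
        have := congrArg p hzw; rwa [hpφ, hpφ] at this
      have h1 : i z.1 = i w.1 := by
        have := hzw; rw [hφ₀, hφ₀, h2] at this
        exact add_right_cancel this
      exact Prod.ext (hi h1) h2
    · intro y
      have : y - s (p y) ∈ LinearMap.range i := by
        rw [hr, LinearMap.mem_ker, map_sub, hsa, sub_self]
      obtain ⟨x₀, hx₀⟩ := this
      exact ⟨(x₀, p y), by rw [hφ₀]; simp only [hx₀]; exact sub_add_cancel y (s (p y))⟩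
  let φ : (M₀.carrier × M₂.carrier) ≃ₗ[S] M₁.carrier := LinearEquiv.ofBijective φ₀ hbij
  have hφ : ∀ z : M₀.carrier × M₂.carrier, φ z = i z.1 + s z.2 := fun z => rfl
  have fact2 : ∀ z, p (φ z) = z.2 := hpφ
  have fact3 : ∀ w, (φ.symm w).2 = p w := by
    intro w
    conv_rhs => rw [← φ.apply_symm_apply w]
    rw [fact2]
  have fact1 : ∀ x₀, φ (x₀, 0) = i x₀ := by
    intro x₀; rw [hφ]; simp
  have fact4 : ∀ x₀, φ.symm (f₁ (i x₀)) = (f₀ x₀, 0) := by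
    intro x₀
    rw [h₀, ← fact1 (f₀ x₀)]
    exact φ.symm_apply_apply _
  -- the complement for M₁
  let c₁ : Compl M₁ :=
    ⟨prodP c₀.Q c₂.Q, prodF c₀.F c₂.F,
      (φ.symm.prodCongr (LinearEquiv.refl S (prodP c₀.Q c₂.Q).carrier)).trans
        ((LinearEquiv.prodProdProdComm S M₀.carrier M₂.carrier c₀.Q.carrier c₂.Q.carrier).trans
          (c₀.e.prodCongr c₂.e))⟩
  have hE : ∀ (x₀ : M₀.carrier) (x₂ : M₂.carrier) (q₀ : c₀.Q.carrier) (q₂ : c₂.Q.carrier),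
      c₁.e (φ (x₀, x₂), (q₀, q₂)) = (c₀.e (x₀, q₀), c₂.e (x₂, q₂)) := by
    intro x₀ x₂ q₀ q₂
    simp only [c₁, LinearEquiv.trans_apply, LinearEquiv.prodCongr_apply, LinearEquiv.refl_apply,
      LinearEquiv.symm_apply_apply, LinearEquiv.prodProdProdComm]
    show (c₀.e.prodCongr c₂.e) ((LinearEquiv.prodProdProdComm S M₀.carrier M₂.carrier c₀.Q.carrier
      c₂.Q.carrier) (φ.symm (φ (x₀, x₂)), (q₀, q₂))) = _
    rw [LinearEquiv.symm_apply_apply]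
    rfl
  have hEs : ∀ (y₀ : c₀.F.carrier) (y₂ : c₂.F.carrier),
      c₁.e.symm (y₀, y₂) =
        (φ ((c₀.e.symm y₀).1, (c₂.e.symm y₂).1), ((c₀.e.symm y₀).2, (c₂.e.symm y₂).2)) := by
    intro y₀ y₂
    erw [LinearEquiv.symm_apply_eq, hE]
    simp
    rfl
  have fact5 : ∀ x₀, f₁ (φ (x₀, 0)) = φ (f₀ x₀, 0) := by
    intro x₀; rw [fact1, h₀, fact1]
  have fact7 : ∀ (x₀ : M₀.carrier) (x₂ : M₂.carrier) (q₀ : c₀.Q.carrier) (q₂ : c₂.Q.carrier),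
      c₁.e (f₁ (φ (x₀, x₂)), (q₀, q₂)) =
        (c₀.e ((φ.symm (f₁ (φ (x₀, x₂)))).1, q₀), c₂.e (f₂ x₂, q₂)) := by
    intro x₀ x₂ q₀ q₂
    have h1 := hE (φ.symm (f₁ (φ (x₀, x₂)))).1 (φ.symm (f₁ (φ (x₀, x₂)))).2 q₀ q₂
    rw [show ((φ.symm (f₁ (φ (x₀, x₂)))).1, (φ.symm (f₁ (φ (x₀, x₂)))).2)
          = φ.symm (f₁ (φ (x₀, x₂))) from rfl, φ.apply_symm_apply] at h1
    rw [h1, fact3, h₂, fact2]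
  rw [bGen_eq ⟨M₁, f₁⟩ c₁, bGen_eq ⟨M₀, f₀⟩ c₀, bGen_eq ⟨M₂, f₂⟩ c₂]
  show K1F.cls S ⟨prodF c₀.F c₂.F, conjAuto c₁.e (f₁.prodCongr (LinearEquiv.refl S c₁.Q.carrier))⟩ = _
  refine K1F.ses S c₀.F (prodF c₀.F c₂.F) c₂.F
    (conjAuto c₀.e (f₀.prodCongr (LinearEquiv.refl S c₀.Q.carrier)))
    (conjAuto c₁.e (f₁.prodCongr (LinearEquiv.refl S c₁.Q.carrier)))
    (conjAuto c₂.e (f₂.prodCongr (LinearEquiv.refl S c₂.Q.carrier)))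
    (LinearMap.inl S c₀.F.carrier c₂.F.carrier)
    (LinearMap.snd S c₀.F.carrier c₂.F.carrier)
    LinearMap.inl_injective (fun y => ⟨(0, y), rfl⟩) (LinearMap.range_inl S _ _) ?_ ?_
  · -- triangularity: first column
    intro y₀
    have h1 : c₁.e.symm (y₀, (0 : c₂.F.carrier))
        = (φ ((c₀.e.symm y₀).1, 0), ((c₀.e.symm y₀).2, 0)) := by
      rw [hEs]; simp; rfl
    show c₁.e ((f₁.prodCongr (LinearEquiv.refl S c₁.Q.carrier)) (c₁.e.symm (y₀, 0)))
        = (conjAuto c₀.e (f₀.prodCongr (LinearEquiv.refl S c₀.Q.carrier)) y₀, 0)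
    rw [h1]
    show c₁.e (f₁ (φ ((c₀.e.symm y₀).1, 0)), ((c₀.e.symm y₀).2, 0)) = _
    rw [fact5, hE]
    simp [conjAuto_apply]
    exact Prod.ext rfl (map_zero c₂.e)
  · -- triangularity: second row
    intro z
    obtain ⟨y₀, y₂⟩ := z
    show (c₁.e ((f₁.prodCongr (LinearEquiv.refl S c₁.Q.carrier)) (c₁.e.symm (y₀, y₂)))).2
        = conjAuto c₂.e (f₂.prodCongr (LinearEquiv.refl S c₂.Q.carrier)) y₂
    rw [hEs]
    show (c₁.e (f₁ (φ ((c₀.e.symm y₀).1, (c₂.e.symm y₂).1)),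
        ((c₀.e.symm y₀).2, (c₂.e.symm y₂).2))).2 = _
    rw [fact7]
    simp [conjAuto_apply]

end K1Proof
namespace K1Proof
variable {S : Type u} [Ring S]

/-- The generator-level map for α. -/
def aGen (g : K1FGen S) : K1Gen S := ⟨g.base.toFGProj, g.auto⟩

/-- α as a homomorphism. -/
def aHom (S : Type u) [Ring S] : K1F S →+ K1 S :=
  QuotientAddGroup.lift _ (FreeAbelianGroup.lift (fun g => K1.cls S (aGen g)))
    (by
      refine (AddSubgroup.closure_le _).2 ?_
      rintro x (⟨M₀, M₁, M₂, f₀, f₁, f₂, i, p, hi, hp, hr, h₀, h₂, rfl⟩ |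
        ⟨M, f, g, rfl⟩) <;>
        rw [SetLike.mem_coe, AddMonoidHom.mem_ker, map_sub, map_sub,
          FreeAbelianGroup.lift_apply_of, FreeAbelianGroup.lift_apply_of, FreeAbelianGroup.lift_apply_of,
          sub_sub, sub_eq_zero]
      · exact K1.ses S M₀.toFGProj M₁.toFGProj M₂.toFGProj f₀ f₁ f₂ i p hi hp hr h₀ h₂
      · exact K1.comp S M.toFGProj f g)

theorem aHom_cls (g : K1FGen S) : aHom S (K1F.cls S g) = K1.cls S (aGen g) := by
  show QuotientAddGroup.lift _ _ _ (QuotientAddGroup.mk _) = _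
  rw [QuotientAddGroup.lift_mk, FreeAbelianGroup.lift_apply_of]

/-- β as a homomorphism. -/
noncomputable def bHom (S : Type u) [Ring S] : K1 S →+ K1F S :=
  QuotientAddGroup.lift _ (FreeAbelianGroup.lift bGen)
    (by
      refine (AddSubgroup.closure_le _).2 ?_
      rintro x (⟨M₀, M₁, M₂, f₀, f₁, f₂, i, p, hi, hp, hr, h₀, h₂, rfl⟩ |
        ⟨M, f, g, rfl⟩) <;>
        rw [SetLike.mem_coe, AddMonoidHom.mem_ker, map_sub, map_sub,
          FreeAbelianGroup.lift_apply_of, FreeAbelianGroup.lift_apply_of, FreeAbelianGroup.lift_apply_of,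
          sub_sub, sub_eq_zero]
      · exact bGen_ses M₀ M₁ M₂ f₀ f₁ f₂ i p hi hp hr h₀ h₂
      · exact bGen_comp M f g)

theorem bHom_cls (g : K1Gen S) : bHom S (K1.cls S g) = bGen g := by
  show QuotientAddGroup.lift _ _ _ (QuotientAddGroup.mk _) = _
  rw [QuotientAddGroup.lift_mk, FreeAbelianGroup.lift_apply_of]

/-- The product-with-punit equivalence. -/
def prodPUnitEquiv (M : Type u) [AddCommGroup M] [Module S M] :
    (M × PUnit.{u+1}) ≃ₗ[S] M :=
  LinearEquiv.ofLinear (LinearMap.fst S M PUnit.{u+1}) (LinearMap.inl S M PUnit.{u+1})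
    rfl (by apply LinearMap.ext; intro z; exact Prod.ext rfl (Subsingleton.elim _ _))

theorem bHom_aHom (g : K1FGen S) : bHom S (aHom S (K1F.cls S g)) = K1F.cls S g := by
  rw [aHom_cls, bHom_cls]
  let c : Compl (aGen g).base := ⟨punitProj S, g.base, prodPUnitEquiv g.base.carrier⟩
  rw [bGen_eq (aGen g) c]
  show K1F.cls S ⟨g.base, conjAuto c.e (g.auto.prodCongr (LinearEquiv.refl S c.Q.carrier))⟩
      = K1F.cls S g
  have heq : conjAuto c.e (g.auto.prodCongr (LinearEquiv.refl S c.Q.carrier)) = g.auto := by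
    apply LinearEquiv.ext
    intro x
    show (prodPUnitEquiv (S := S) g.base.carrier)
      ((g.auto.prodCongr (LinearEquiv.refl S _)) ((prodPUnitEquiv g.base.carrier).symm x)) = _
    have hsymm : (prodPUnitEquiv (S := S) g.base.carrier).symm x = (x, PUnit.unit) := by
      apply (prodPUnitEquiv (S := S) g.base.carrier).injective
      rw [LinearEquiv.apply_symm_apply]
      rfl
    rw [hsymm]
    rfl
  rw [heq]

theorem aHom_bHom (g : K1Gen S) : aHom S (bHom S (K1.cls S g)) = K1.cls S g := by
  rw [bHom_cls]
  obtain ⟨c⟩ := compl_nonempty g.base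
  rw [bGen_eq g c]
  show aHom S (K1F.cls S ⟨c.F, conjAuto c.e (g.auto.prodCongr (LinearEquiv.refl S c.Q.carrier))⟩)
      = K1.cls S g
  rw [aHom_cls]
  show K1.cls S ⟨c.F.toFGProj, conjAuto c.e (g.auto.prodCongr (LinearEquiv.refl S c.Q.carrier))⟩
      = K1.cls S g
  have h1 := K1.conj S (prodP g.base c.Q) c.F.toFGProj c.e
    (g.auto.prodCongr (LinearEquiv.refl S c.Q.carrier))
    (conjAuto c.e (g.auto.prodCongr (LinearEquiv.refl S c.Q.carrier)))
    (fun m => by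
      show c.e ((g.auto.prodCongr (LinearEquiv.refl S c.Q.carrier)) (c.e.symm (c.e m)))
          = c.e ((g.auto.prodCongr (LinearEquiv.refl S c.Q.carrier)) m)
      erw [c.e.symm_apply_apply])
  rw [h1, K1.stab S g.base c.Q g.auto]

end K1Proof
namespace K1Proof
variable {S : Type u} [Ring S]

theorem bHom_aHom_all (x : K1F S) : bHom S (aHom S x) = x := by
  refine QuotientAddGroup.induction_on x ?_
  intro z
  refine FreeAbelianGroup.induction_on z ?_ ?_ ?_ ?_
  · show bHom S (aHom S (QuotientAddGroup.mk (0 : FreeAbelianGroup (K1FGen S)) : K1F S)) = _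
    exact (congrArg (bHom S) (map_zero (aHom S))).trans (map_zero (bHom S))
  · intro g
    exact bHom_aHom g
  · intro g h
    show bHom S (aHom S (QuotientAddGroup.mk (-FreeAbelianGroup.of g : FreeAbelianGroup (K1FGen S)) : K1F S)) = _
    exact (congrArg (bHom S) (map_neg (aHom S) (QuotientAddGroup.mk (FreeAbelianGroup.of g) : K1F S))).trans
      ((map_neg (bHom S) _).trans (congrArg Neg.neg h))
  · intro a b ha hb
    show bHom S (aHom S (QuotientAddGroup.mk (a + b : FreeAbelianGroup (K1FGen S)) : K1F S)) = _
    exact (congrArg (bHom S) (map_add (aHom S) (QuotientAddGroup.mk a : K1F S) (QuotientAddGroup.mk b))).trans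
      ((map_add (bHom S) _ _).trans (congrArg₂ (· + ·) ha hb))

theorem aHom_bHom_all (x : K1 S) : aHom S (bHom S x) = x := by
  refine QuotientAddGroup.induction_on x ?_
  intro z
  refine FreeAbelianGroup.induction_on z ?_ ?_ ?_ ?_
  · show aHom S (bHom S (QuotientAddGroup.mk (0 : FreeAbelianGroup (K1Gen S)) : K1 S)) = _
    exact (congrArg (aHom S) (map_zero (bHom S))).trans (map_zero (aHom S))
  · intro g
    exact aHom_bHom g
  · intro g h
    show aHom S (bHom S (QuotientAddGroup.mk (-FreeAbelianGroup.of g : FreeAbelianGroup (K1Gen S)) : K1 S)) = _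
    exact (congrArg (aHom S) (map_neg (bHom S) (QuotientAddGroup.mk (FreeAbelianGroup.of g) : K1 S))).trans
      ((map_neg (aHom S) _).trans (congrArg Neg.neg h))
  · intro a b ha hb
    show aHom S (bHom S (QuotientAddGroup.mk (a + b : FreeAbelianGroup (K1Gen S)) : K1 S)) = _
    exact (congrArg (aHom S) (map_add (bHom S) (QuotientAddGroup.mk a : K1 S) (QuotientAddGroup.mk b))).trans
      ((map_add (aHom S) _ _).trans (congrArg₂ (· + ·) ha hb))

end K1Proof

/-- The canonical map `α : K₁ᶠ(S) → K₁(S)`, `[f] ↦ [f]`, is an isomorphism. -/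
theorem K1F_to_K1_isomorphism (S : Type u) [Ring S] :
    ∃ α : K1F S →+ K1 S,
      (∀ g : K1FGen S, α (K1F.cls S g) = K1.cls S ⟨g.base.toFGProj, g.auto⟩) ∧
      Function.Bijective α := by
  refine ⟨K1Proof.aHom S, fun g => K1Proof.aHom_cls g, ?_⟩
  exact Function.bijective_iff_has_inverse.2
    ⟨K1Proof.bHom S, K1Proof.bHom_aHom_all, K1Proof.aHom_bHom_all⟩
end

section
/- Every virtually cyclic group is either finite, or maps onto ℤ with finite kernel, or maps onto the infinite dihedral group with finite kernel; in particular a torsionfree virtually cyclic group is trivial or infinite cyclic. -/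
/-!
STATEMENT 16: Every virtually cyclic group is either finite, or maps onto `ℤ` with finite
kernel, or maps onto the infinite dihedral group (`DihedralGroup 0`) with finite kernel;
in particular, a torsionfree virtually cyclic group is trivial or infinite cyclic.
-/

/-- A group is virtually cyclic if it has a cyclic subgroup of finite index. -/
def IsVirtuallyCyclic (G : Type*) [Group G] : Prop :=
  ∃ H : Subgroup G, IsCyclic H ∧ H.FiniteIndex


open Subgroup

private lemma zpow_inj' {G : Type*} [Group G] {t : G} (h : ¬ IsOfFinOrder t)
    {a b : ℤ} (hab : t ^ a = t ^ b) : a = b :=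
  (injective_zpow_iff_not_isOfFinOrder.2 h) hab

private lemma coe_finOrd {G : Type*} [Group G] {H : Subgroup G} {x : H}
    (h : IsOfFinOrder x) : IsOfFinOrder (x : G) := by
  obtain ⟨n, hn, hx⟩ := isOfFinOrder_iff_pow_eq_one.1 h
  exact isOfFinOrder_iff_pow_eq_one.2 ⟨n, hn, by
    have := congrArg (Subtype.val) hx
    simpa using this⟩

private lemma lemA {G : Type*} [Group G] (t : G) (ht : t ∈ Subgroup.center G)
    (hord : ¬ IsOfFinOrder t) (hfi : (Subgroup.zpowers t).FiniteIndex) :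
    ∃ (φ : G →* Multiplicative ℤ) (E : ℕ) (d : ℤ), Function.Surjective φ ∧ 0 < E ∧ d ≠ 0 ∧
      ∀ g : G, g ^ E = t ^ (d * (Multiplicative.toAdd (φ g))) := by
  have hle : Subgroup.zpowers t ≤ Subgroup.center G := zpowers_le.2 ht
  haveI hZfi : (Subgroup.center G).FiniteIndex := by
    constructor
    intro h0
    exact hfi.index_ne_zero (Nat.eq_zero_of_zero_dvd (h0 ▸ index_dvd_of_le hle))
  set n := (Subgroup.center G).index with hn
  have hn0 : n ≠ 0 := hZfi.index_ne_zero
  set t' : Subgroup.center G := ⟨t, ht⟩ with ht'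
  have hord' : ¬ IsOfFinOrder t' := fun h => hord (coe_finOrd h)
  -- index of zpowers t' inside center G
  have hzeq : Subgroup.zpowers t' = (Subgroup.zpowers t).subgroupOf (Subgroup.center G) := by
    ext x
    simp only [mem_zpowers_iff, mem_subgroupOf, Subtype.ext_iff]
    constructor
    · rintro ⟨k, hk⟩; exact ⟨k, by rw [← hk]; simp; rfl⟩
    · rintro ⟨k, hk⟩; exact ⟨k, by rw [← hk] at *; simp; rfl⟩
  set k := (Subgroup.zpowers t').index with hk
  have hk0 : k ≠ 0 := by
    intro h0
    have hrel := relIndex_mul_index hle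
    have : (Subgroup.zpowers t).relIndex (Subgroup.center G) = 0 := by
      rw [relIndex, ← hzeq, ← hk, h0]
    rw [this, zero_mul] at hrel
    exact hfi.index_ne_zero hrel.symm
  haveI : (Subgroup.zpowers t').Normal := Subgroup.normal_of_comm _
  have hpow : ∀ a : Subgroup.center G, a ^ k ∈ Subgroup.zpowers t' :=
    fun a => Subgroup.pow_index_mem _ a
  have hex : ∀ a : Subgroup.center G, ∃ m : ℤ, t' ^ m = a ^ k :=
    fun a => mem_zpowers_iff.1 (hpow a)
  choose χ hχ using hex
  set T := MonoidHom.transferCenterPow G with hT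
  set Φ : G → ℤ := fun g => χ (T g) with hΦ
  have key : ∀ g : G, g ^ (n * k) = t ^ (Φ g) := by
    intro g
    have h2 : t' ^ (Φ g) = (T g) ^ k := hχ (T g)
    have h3 := congrArg (Subtype.val) h2
    simp only [SubgroupClass.coe_zpow, SubgroupClass.coe_pow] at h3
    have h1 : ((T g : Subgroup.center G) : G) = g ^ n := MonoidHom.transferCenterPow_apply g
    rw [h1, ← pow_mul] at h3
    exact h3.symm
  have hinj' : Function.Injective fun m : ℤ => t' ^ m :=
    injective_zpow_iff_not_isOfFinOrder.2 hord'
  have hadd : ∀ g h : G, Φ (g * h) = Φ g + Φ h := by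
    intro g h
    apply hinj'
    show t' ^ Φ (g * h) = t' ^ (Φ g + Φ h)
    rw [zpow_add, hχ, hχ, hχ, map_mul, (Commute.mul_pow (Subtype.ext (Subgroup.mem_center_iff.1 (T h).2 (T g)) : Commute (T g) (T h)) k)]
  have hone : Φ 1 = 0 := by have := hadd 1 1; simp at this; omega
  have hneg : ∀ g : G, Φ g⁻¹ = - Φ g := by
    intro g
    have := hadd g⁻¹ g
    simp only [inv_mul_cancel, hone] at this
    omega
  have hΦt : Φ t = (n * k : ℕ) := by
    have h1 := key t
    have : t ^ ((n*k : ℕ) : ℤ) = t ^ Φ t := by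
      rw [zpow_natCast]; exact h1
    exact (zpow_inj' hord this).symm
  have hnk0 : (n * k : ℕ) ≠ 0 := Nat.mul_ne_zero hn0 hk0
  -- range of Φ as an AddSubgroup
  set S : AddSubgroup ℤ :=
    { carrier := Set.range Φ
      zero_mem' := ⟨1, hone⟩
      add_mem' := by rintro a b ⟨g, rfl⟩ ⟨h, rfl⟩; exact ⟨g * h, hadd g h⟩
      neg_mem' := by rintro a ⟨g, rfl⟩; exact ⟨g⁻¹, hneg g⟩ } with hS
  obtain ⟨m, hm⟩ := Int.subgroup_cyclic S
  have hmemS : ∀ g : G, ∃ z : ℤ, z * m = Φ g := by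
    intro g
    have : Φ g ∈ S := ⟨g, rfl⟩
    rw [hm] at this
    obtain ⟨z, hz⟩ := AddSubgroup.mem_closure_singleton.1 this
    exact ⟨z, by simpa [smul_eq_mul] using hz⟩
  have hm0 : m ≠ 0 := by
    rintro rfl
    obtain ⟨z, hz⟩ := hmemS t
    rw [mul_zero] at hz
    rw [hΦt] at hz
    exact hnk0 (by exact_mod_cast hz.symm)
  have hdvd : ∀ g : G, m ∣ Φ g := fun g => by
    obtain ⟨z, hz⟩ := hmemS g; exact Dvd.intro_left z hz
  have hdiv : ∀ g : G, m * (Φ g / m) = Φ g := fun g => Int.mul_ediv_cancel' (hdvd g)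
  refine ⟨MonoidHom.mk' (fun g => Multiplicative.ofAdd (Φ g / m)) ?_, n * k, m, ?_, ?_, hm0, ?_⟩
  · intro g h
    have : Φ (g * h) / m = Φ g / m + Φ h / m := by
      have h1 := hdiv g
      have h2 := hdiv h
      have h3 : Φ (g * h) = m * (Φ g / m + Φ h / m) := by rw [mul_add, h1, h2, hadd]
      rw [h3, Int.mul_ediv_cancel_left _ hm0]
    simp [this]
  · intro z
    have hmz : (Multiplicative.toAdd z) * m ∈ S := by
      rw [hm]
      exact AddSubgroup.mem_closure_singleton.2 ⟨Multiplicative.toAdd z, by simp [smul_eq_mul]⟩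
    obtain ⟨g, hg⟩ := hmz
    refine ⟨g, ?_⟩
    simp only [MonoidHom.mk'_apply]
    rw [hg, mul_comm, Int.mul_ediv_cancel_left _ hm0]
    simp
  · positivity
  · intro g
    have : m * Multiplicative.toAdd ((fun g => Multiplicative.ofAdd (Φ g / m)) g) = Φ g := by
      simp only [toAdd_ofAdd]
      exact hdiv g
    rw [key g]
    congr 1
    simpa using this.symm

private lemma kerFinite {G : Type*} [Group G] {s : G} (hs : ¬ IsOfFinOrder s)
    (hfi : (Subgroup.zpowers s).FiniteIndex) (K : Subgroup G) {E : ℕ} (hE : 0 < E)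
    (hK : ∀ g ∈ K, g ^ E = 1) : Finite K := by
  haveI : Finite (G ⧸ Subgroup.zpowers s) := Subgroup.finite_quotient_of_finiteIndex
  refine Finite.of_injective (fun x : K => (QuotientGroup.mk (x : G) : G ⧸ Subgroup.zpowers s)) ?_
  intro x y hxy
  have hmem : (x : G)⁻¹ * y ∈ Subgroup.zpowers s := QuotientGroup.eq.1 hxy
  obtain ⟨a, ha⟩ := mem_zpowers_iff.1 hmem
  have hxyK : (x : G)⁻¹ * y ∈ K := by
    have := mul_mem (inv_mem x.2) y.2
    exact this
  have hpow : ((x : G)⁻¹ * (y : G)) ^ E = 1 := hK _ hxyK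
  rw [← ha, ← zpow_natCast, ← zpow_mul] at hpow
  have : a * (E : ℤ) = 0 := zpow_inj' hs (by simpa using hpow)
  have ha0 : a = 0 := by
    rcases mul_eq_zero.1 this with h | h
    · exact h
    · omega
  rw [ha0] at ha
  simp only [zpow_zero] at ha
  have : (x : G) = y := by
    have := ha.symm
    rwa [inv_mul_eq_one] at this
  exact Subtype.ext this

private lemma mainCase {G : Type*} [Group G] (hinf : Infinite G)
    (H : Subgroup G) (hc : IsCyclic H) (hfi : H.FiniteIndex) :
    (∃ φ : G →* Multiplicative ℤ, Function.Surjective φ ∧ Finite φ.ker) ∨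
    (∃ ψ : G →* DihedralGroup 0, Function.Surjective ψ ∧ Finite ψ.ker) := by
  classical
  obtain ⟨h, hgen⟩ := hc.exists_generator
  set t : G := (h : G) with htdef
  have hHle : H ≤ Subgroup.zpowers t := by
    intro x hx
    obtain ⟨a, ha⟩ := mem_zpowers_iff.1 (hgen ⟨x, hx⟩)
    exact mem_zpowers_iff.2 ⟨a, by
      have := congrArg (Subtype.val) ha
      simpa using this⟩
  haveI hfit : (Subgroup.zpowers t).FiniteIndex :=
    ⟨fun h0 => hfi.index_ne_zero (Nat.eq_zero_of_zero_dvd (h0 ▸ index_dvd_of_le hHle))⟩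
  have hcard : Nat.card G = 0 := Nat.card_eq_zero_of_infinite
  have htord : ¬ IsOfFinOrder t := by
    intro hford
    have h2 := Subgroup.card_mul_index (Subgroup.zpowers t)
    rw [hcard] at h2
    rcases Nat.mul_eq_zero.1 h2 with h' | h'
    · rw [Nat.card_zpowers] at h'
      exact hford.orderOf_pos.ne' h'
    · exact hfit.index_ne_zero h'
  have hzord : ∀ a : ℤ, a ≠ 0 → ¬ IsOfFinOrder (t ^ a) := by
    intro a ha hford
    obtain ⟨n, hn, h1⟩ := isOfFinOrder_iff_pow_eq_one.1 hford
    rw [← zpow_natCast, ← zpow_mul] at h1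
    have h2 : t ^ (a * (n : ℤ)) = t ^ (0 : ℤ) := by simpa using h1
    have h3 := zpow_inj' htord h2
    rcases mul_eq_zero.1 h3 with h' | h'
    · exact ha h'
    · omega
  -- the normal core
  set N := (Subgroup.zpowers t).normalCore with hNdef
  haveI hNfi : N.FiniteIndex := inferInstance
  have hNle : N ≤ Subgroup.zpowers t := Subgroup.normalCore_le _
  haveI hNnorm : N.Normal := inferInstance
  -- exponents of elements of N
  set A : AddSubgroup ℤ :=
    { carrier := {a : ℤ | t ^ a ∈ N}
      zero_mem' := by simp only [Set.mem_setOf_eq, zpow_zero]; exact one_mem N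
      add_mem' := by
        intro a b ha hb
        simp only [Set.mem_setOf_eq, zpow_add] at *
        exact mul_mem ha hb
      neg_mem' := by
        intro a ha
        simp only [Set.mem_setOf_eq, zpow_neg] at *
        exact inv_mem ha } with hAdef
  obtain ⟨a₀, ha₀⟩ := Int.subgroup_cyclic A
  set s : G := t ^ a₀ with hsdef
  have hsN : s ∈ N := by
    have : a₀ ∈ A := by
      rw [ha₀]; exact AddSubgroup.mem_closure_singleton.2 ⟨1, one_smul _ _⟩
    exact this
  have hNs : N = Subgroup.zpowers s := by
    apply le_antisymm
    · intro x hx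
      obtain ⟨b, hb⟩ := mem_zpowers_iff.1 (hNle hx)
      have hbA : b ∈ A := by
        show t ^ b ∈ N
        rw [hb]; exact hx
      rw [ha₀] at hbA
      obtain ⟨z, hz⟩ := AddSubgroup.mem_closure_singleton.1 hbA
      refine mem_zpowers_iff.2 ⟨z, ?_⟩
      rw [hsdef, ← zpow_mul]
      rw [← hb]
      congr 1
      rw [← hz]; simp [smul_eq_mul]; ring
    · rw [zpowers_le]; exact hsN
  have hNne : N ≠ ⊥ := by
    intro h0
    have h1 := hNfi.index_ne_zero
    rw [h0, Subgroup.index_bot, hcard] at h1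
    exact h1 rfl
  have ha₀0 : a₀ ≠ 0 := by
    rintro rfl
    apply hNne
    rw [hNs, hsdef, zpow_zero]
    exact Subgroup.zpowers_one_eq_bot
  have hsord : ¬ IsOfFinOrder s := hzord a₀ ha₀0
  haveI hsfi : (Subgroup.zpowers s).FiniteIndex := hNs ▸ hNfi
  -- the dichotomy
  have hdich : ∀ g : G, g * s * g⁻¹ = s ∨ g * s * g⁻¹ = s⁻¹ := by
    intro g
    have h1 : g * s * g⁻¹ ∈ N := hNnorm.conj_mem s hsN g
    have h2 : g⁻¹ * s * g ∈ N := by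
      have := hNnorm.conj_mem s hsN g⁻¹
      simpa using this
    rw [hNs] at h1 h2
    obtain ⟨a, ha⟩ := mem_zpowers_iff.1 h1
    obtain ⟨b, hb⟩ := mem_zpowers_iff.1 h2
    have key : s ^ (1 : ℤ) = s ^ (b * a) := by
      have e1 : s = g⁻¹ * (g * s * g⁻¹) * g := by group
      have e2 : g⁻¹ * (g * s * g⁻¹) * g = g⁻¹ * s ^ a * g := by rw [ha]
      have e3 : g⁻¹ * s ^ a * g = (g⁻¹ * s * g⁻¹⁻¹) ^ a := by rw [conj_zpow]; group
      have e4 : (g⁻¹ * s * g⁻¹⁻¹) ^ a = (s ^ b) ^ a := by rw [inv_inv, hb]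
      have e5 : (s ^ b) ^ a = s ^ (b * a) := by rw [← zpow_mul]
      rw [zpow_one]
      exact e1.trans (e2.trans (e3.trans (e4.trans e5)))
    have hba : b * a = 1 := (zpow_inj' hsord key).symm
    rcases Int.eq_one_or_neg_one_of_mul_eq_one' hba with ⟨_, ha1⟩ | ⟨_, ha1⟩
    · left; rw [← ha, ha1, zpow_one]
    · right; rw [← ha, ha1, zpow_neg, zpow_one]
  -- case split on whether s is central
  by_cases hcent : ∀ g : G, g * s = s * g
  · -- s central: map onto ℤ
    have hsc : s ∈ Subgroup.center G := Subgroup.mem_center_iff.2 hcent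
    obtain ⟨φ, E, d, hsurj, hE, hd, hid⟩ := lemA s hsc hsord hsfi
    refine Or.inl ⟨φ, hsurj, ?_⟩
    refine kerFinite hsord hsfi φ.ker hE ?_
    intro g hg
    have h1 := hid g
    rw [MonoidHom.mem_ker.1 hg] at h1
    simpa using h1
  · -- the dihedral case
    push_neg at hcent
    obtain ⟨g₀, hg₀⟩ := hcent
    have hsc : SemiconjBy g₀ s s⁻¹ := by
      rcases hdich g₀ with h' | h'
      · exact absurd (mul_inv_eq_iff_eq_mul.1 h' : g₀ * s = s * g₀) hg₀
      · exact mul_inv_eq_iff_eq_mul.1 h'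
    have hg₀conj : g₀ * s * g₀⁻¹ = s⁻¹ := mul_inv_eq_iff_eq_mul.2 hsc
    have hsc1 : SemiconjBy g₀ s⁻¹ s := by simpa using hsc.inv_right
    have hsc2 : SemiconjBy g₀⁻¹ s⁻¹ s := hsc.inv_symm_left
    have hsc3 : SemiconjBy g₀⁻¹ s s⁻¹ := hsc1.inv_symm_left
    set K : Subgroup G := Subgroup.centralizer {s} with hKdef
    have hmemK : ∀ g : G, g ∈ K ↔ g * s = s * g := fun g =>
      Subgroup.mem_centralizer_singleton_iff
    have hsK : s ∈ K := (hmemK s).2 rfl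
    have hzsle : Subgroup.zpowers s ≤ K := zpowers_le.2 hsK
    haveI hKfi : K.FiniteIndex :=
      ⟨fun h0 => hsfi.index_ne_zero (Nat.eq_zero_of_zero_dvd (h0 ▸ index_dvd_of_le hzsle))⟩
    have hg₀K : g₀ ∉ K := fun h' => hg₀ ((hmemK g₀).1 h')
    -- conjugation by an inverting element preserves K
    have hconjK : ∀ a : G, a * s * a⁻¹ = s⁻¹ → ∀ x ∈ K, ∀ u : G, u = a * x * a⁻¹ → u ∈ K := by
      intro a haa x hx u hu
      subst hu
      have haa' : SemiconjBy a s s⁻¹ := mul_inv_eq_iff_eq_mul.1 haa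
      have h₁ : SemiconjBy a s⁻¹ s := by simpa using haa'.inv_right
      have h₃ : SemiconjBy a⁻¹ s s⁻¹ := h₁.inv_symm_left
      have hxc : Commute x s := (hmemK x).1 hx
      have h₂ : SemiconjBy x s⁻¹ s⁻¹ := hxc.inv_right
      have hfinal : SemiconjBy (a * (x * a⁻¹)) s s := h₁.mul_left (h₂.mul_left h₃)
      rw [hmemK]
      have he : a * x * a⁻¹ = a * (x * a⁻¹) := by group
      rw [he]
      exact hfinal
    have hg₀conj'' : g₀⁻¹ * s * g₀⁻¹⁻¹ = s⁻¹ := mul_inv_eq_iff_eq_mul.2 hsc3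
    -- membership dichotomy
    have hmem2 : ∀ g : G, g ∈ K ∨ g₀⁻¹ * g ∈ K := by
      intro g
      rcases hdich g with hcase | hcase
      · left
        rw [hmemK]
        exact mul_inv_eq_iff_eq_mul.1 hcase
      · right
        rw [hmemK]
        have hgsc : SemiconjBy g s s⁻¹ := mul_inv_eq_iff_eq_mul.1 hcase
        exact hsc2.mul_left hgsc
    -- g₀² is in K
    have hsqK : g₀ * g₀ ∈ K := by
      rw [hmemK]
      exact hsc1.mul_left hsc
    -- s as an element of K, central there
    set t' : K := ⟨s, hsK⟩ with ht'def
    have ht'c : t' ∈ Subgroup.center K := by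
      rw [Subgroup.mem_center_iff]
      intro x
      exact Subtype.ext ((hmemK (x : G)).1 x.2)
    have ht'ord : ¬ IsOfFinOrder t' := fun hford => hsord (coe_finOrd hford)
    have hzeq : Subgroup.zpowers t' = (Subgroup.zpowers s).subgroupOf K := by
      ext x
      simp only [mem_zpowers_iff, mem_subgroupOf, Subtype.ext_iff]
      constructor
      · rintro ⟨a, ha⟩; exact ⟨a, by rw [← ha]; simp; rfl⟩
      · rintro ⟨a, ha⟩; exact ⟨a, by rw [← ha] at *; simp; rfl⟩
    haveI hzt'fi : (Subgroup.zpowers t').FiniteIndex := by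
      constructor
      intro h0
      have hrel := relIndex_mul_index hzsle
      have hz : (Subgroup.zpowers s).relIndex K = 0 := by
        rw [relIndex, ← hzeq]; exact h0
      rw [hz, zero_mul] at hrel
      exact hsfi.index_ne_zero hrel.symm
    obtain ⟨φ, E, d, hsurj, hE, hd, hid⟩ := lemA t' ht'c ht'ord hzt'fi
    have hidG : ∀ x : K, (x : G) ^ E = s ^ (d * Multiplicative.toAdd (φ x)) := by
      intro x
      have := congrArg (Subtype.val) (hid x)
      simpa using this
    -- the integer-valued function
    set F : G → ℤ := fun g => if h : g ∈ K then Multiplicative.toAdd (φ ⟨g, h⟩) else 0 with hFdef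
    have hFval : ∀ (g : G) (h : g ∈ K), F g = Multiplicative.toAdd (φ ⟨g, h⟩) := by
      intro g h'
      simp only [hFdef, dif_pos h']
    have hFmul : ∀ x y : G, x ∈ K → y ∈ K → F (x * y) = F x + F y := by
      intro x y hx hy
      rw [hFval x hx, hFval y hy, hFval (x * y) (mul_mem hx hy)]
      have : (⟨x * y, mul_mem hx hy⟩ : K) = ⟨x, hx⟩ * ⟨y, hy⟩ := rfl
      rw [this, map_mul]
      simp
    have hFpow : ∀ (g : G) (h : g ∈ K), g ^ E = s ^ (d * F g) := by
      intro g h'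
      rw [hFval g h']
      exact hidG ⟨g, h'⟩
    -- conjugation negates F
    have hFconj : ∀ a : G, a * s * a⁻¹ = s⁻¹ → ∀ x : G, x ∈ K → ∀ u : G, u = a * x * a⁻¹ →
        F u = - F x := by
      intro a haa x hx u hu
      have huK : u ∈ K := hconjK a haa x hx u hu
      have h3 := hFpow u huK
      have h5 : u ^ E = s ^ (-(d * F x)) := by
        rw [hu, conj_pow, hFpow x hx, ← conj_zpow, haa, inv_zpow, ← zpow_neg]
      rw [h3] at h5
      have h6 := zpow_inj' hsord h5
      have h7 : d * F u = d * (- F x) := by rw [mul_neg]; exact h6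
      exact mul_left_cancel₀ hd h7
    have hFA : ∀ x : G, x ∈ K → F (g₀⁻¹ * x * g₀) = - F x := by
      intro x hx
      exact hFconj g₀⁻¹ hg₀conj'' x hx _ (by group)
    have hFB : ∀ x : G, x ∈ K → F (g₀ * x * g₀⁻¹) = - F x := by
      intro x hx
      exact hFconj g₀ hg₀conj x hx _ rfl
    -- F of the square is zero
    have hFsq : F (g₀ * g₀) = 0 := by
      have h3 := hFpow (g₀ * g₀) hsqK
      have h7 : (g₀ * g₀) ^ E = s ^ (-(d * F (g₀ * g₀))) := by
        calc (g₀ * g₀) ^ E = (g₀ * (g₀ * g₀) * g₀⁻¹) ^ E := by congr 1; group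
          _ = g₀ * (g₀ * g₀) ^ E * g₀⁻¹ := conj_pow
          _ = g₀ * s ^ (d * F (g₀ * g₀)) * g₀⁻¹ := by rw [h3]
          _ = (g₀ * s * g₀⁻¹) ^ (d * F (g₀ * g₀)) := by rw [conj_zpow]
          _ = s ^ (-(d * F (g₀ * g₀))) := by rw [hg₀conj, inv_zpow, ← zpow_neg]
      rw [h3] at h7
      have h6 := zpow_inj' hsord h7
      have hd0 : d * F (g₀ * g₀) = 0 := by omega
      rcases mul_eq_zero.1 hd0 with h' | h'
      · exact absurd h' hd
      · exact h'
    -- the homomorphism to the infinite dihedral group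
    set ψf : G → DihedralGroup 0 := fun g =>
      if h : g ∈ K then DihedralGroup.r (F g : ZMod 0)
      else DihedralGroup.sr (F (g₀⁻¹ * g) : ZMod 0) with hψfdef
    have hnotK : ∀ g : G, g ∉ K → g₀⁻¹ * g ∈ K := fun g h' => (hmem2 g).resolve_left h'
    have hψmul : ∀ x y : G, ψf (x * y) = ψf x * ψf y := by
      intro x y
      by_cases hx : x ∈ K <;> by_cases hy : y ∈ K
      · have hxy : x * y ∈ K := mul_mem hx hy
        simp only [hψfdef, dif_pos hx, dif_pos hy, dif_pos hxy, DihedralGroup.r_mul_r]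
        congr 1
        have := hFmul x y hx hy
        exact_mod_cast this
      · have hxy : x * y ∉ K := fun h' => hy (by
          have := mul_mem (inv_mem hx) h'
          simpa [mul_assoc] using this)
        have hy' : g₀⁻¹ * y ∈ K := hnotK y hy
        have hc : g₀⁻¹ * x * g₀ ∈ K := hconjK g₀⁻¹ hg₀conj'' x hx _ (by group)
        simp only [hψfdef, dif_pos hx, dif_neg hy, dif_neg hxy, DihedralGroup.r_mul_sr]
        congr 1
        have hdecomp : g₀⁻¹ * (x * y) = (g₀⁻¹ * x * g₀) * (g₀⁻¹ * y) := by group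
        have e1 : F (g₀⁻¹ * (x * y)) = F (g₀⁻¹ * x * g₀) + F (g₀⁻¹ * y) := by
          rw [hdecomp]; exact hFmul _ _ hc hy'
        have e2 := hFA x hx
        have : F (g₀⁻¹ * (x * y)) = F (g₀⁻¹ * y) - F x := by omega
        exact_mod_cast this
      · have hxy : x * y ∉ K := fun h' => hx (by
          have := mul_mem h' (inv_mem hy)
          simpa [mul_assoc] using this)
        have hx' : g₀⁻¹ * x ∈ K := hnotK x hx
        simp only [hψfdef, dif_neg hx, dif_pos hy, dif_neg hxy, DihedralGroup.sr_mul_r]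
        congr 1
        have hdecomp : g₀⁻¹ * (x * y) = (g₀⁻¹ * x) * y := by group
        have e1 : F (g₀⁻¹ * (x * y)) = F (g₀⁻¹ * x) + F y := by
          rw [hdecomp]; exact hFmul _ _ hx' hy
        exact_mod_cast e1
      · have hu : g₀⁻¹ * x ∈ K := hnotK x hx
        have hv : g₀⁻¹ * y ∈ K := hnotK y hy
        have hcu : g₀⁻¹ * (g₀⁻¹ * x) * g₀ ∈ K := hconjK g₀⁻¹ hg₀conj'' _ hu _ (by group)
        have hxy : x * y ∈ K := by
          have e : x * y = ((g₀ * g₀) * (g₀⁻¹ * (g₀⁻¹ * x) * g₀)) * (g₀⁻¹ * y) := by group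
          rw [e]
          exact mul_mem (mul_mem hsqK hcu) hv
        simp only [hψfdef, dif_neg hx, dif_neg hy, dif_pos hxy, DihedralGroup.sr_mul_sr]
        congr 1
        have e : x * y = ((g₀ * g₀) * (g₀⁻¹ * (g₀⁻¹ * x) * g₀)) * (g₀⁻¹ * y) := by group
        have e1 : F (x * y) = F ((g₀ * g₀) * (g₀⁻¹ * (g₀⁻¹ * x) * g₀)) + F (g₀⁻¹ * y) := by
          rw [e]; exact hFmul _ _ (mul_mem hsqK hcu) hv
        have e2 : F ((g₀ * g₀) * (g₀⁻¹ * (g₀⁻¹ * x) * g₀)) = F (g₀ * g₀) + F (g₀⁻¹ * (g₀⁻¹ * x) * g₀) :=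
          hFmul _ _ hsqK hcu
        have e3 := hFA (g₀⁻¹ * x) hu
        have : F (x * y) = F (g₀⁻¹ * y) - F (g₀⁻¹ * x) := by omega
        exact_mod_cast this
    set ψ : G →* DihedralGroup 0 := MonoidHom.mk' ψf hψmul with hψdef
    refine Or.inr ⟨ψ, ?_, ?_⟩
    · -- surjectivity
      rintro (z | z)
      · obtain ⟨x, hx⟩ := hsurj (Multiplicative.ofAdd (z : ℤ))
        refine ⟨(x : G), ?_⟩
        show ψf (x : G) = _
        rw [hψfdef]
        simp only [dif_pos x.2]
        congr 1
        rw [hFval _ x.2]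
        have : (⟨(x : G), x.2⟩ : K) = x := Subtype.ext rfl
        rw [this, hx]
        rfl
      · obtain ⟨u, hu⟩ := hsurj (Multiplicative.ofAdd (z : ℤ))
        have hgu : g₀ * (u : G) ∉ K := fun h' => hg₀K (by
          have := mul_mem h' (inv_mem u.2)
          simpa [mul_assoc] using this)
        refine ⟨g₀ * (u : G), ?_⟩
        show ψf (g₀ * (u : G)) = _
        rw [hψfdef]
        simp only [dif_neg hgu]
        congr 1
        have e : g₀⁻¹ * (g₀ * (u : G)) = (u : G) := by group
        rw [e, hFval _ u.2]
        have : (⟨(u : G), u.2⟩ : K) = u := Subtype.ext rfl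
        rw [this, hu]
        rfl
    · -- finite kernel
      refine kerFinite hsord hsfi ψ.ker hE ?_
      intro g hg
      have h1 : ψf g = 1 := hg
      rw [DihedralGroup.one_def] at h1
      by_cases hgK : g ∈ K
      · rw [hψfdef] at h1
        simp only [dif_pos hgK] at h1
        have h2 : (F g : ZMod 0) = 0 := by
          injection h1
        have h3 : F g = 0 := by exact_mod_cast h2
        rw [hFpow g hgK, h3, mul_zero, zpow_zero]
      · exfalso
        rw [hψfdef] at h1
        simp only [dif_neg hgK] at h1
        cases h1

theorem virtuallyCyclic_trichotomy (G : Type*) [Group G] (hG : IsVirtuallyCyclic G) :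
    (Finite G ∨
      (∃ φ : G →* Multiplicative ℤ, Function.Surjective φ ∧ Finite φ.ker) ∨
      (∃ ψ : G →* DihedralGroup 0, Function.Surjective ψ ∧ Finite ψ.ker)) ∧
    ((∀ g : G, g ≠ 1 → ¬IsOfFinOrder g) →
      Subsingleton G ∨ Nonempty (G ≃* Multiplicative ℤ)) := by
  obtain ⟨H, hHc, hHfi⟩ := hG
  by_cases hfin : Finite G
  · refine ⟨Or.inl hfin, fun htf => Or.inl ?_⟩
    have h1 : ∀ g : G, g = 1 := by
      intro g
      by_contra hg
      exact htf g hg (isOfFinOrder_of_finite g)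
    exact ⟨fun a b => (h1 a).trans (h1 b).symm⟩
  · have hinf : Infinite G := not_finite_iff_infinite.1 hfin
    have hmain := mainCase hinf H hHc hHfi
    refine ⟨Or.inr hmain, fun htf => ?_⟩
    rcases hmain with ⟨φ, hsurj, hker⟩ | ⟨ψ, hsurj, hker⟩
    · right
      have hkerbot : φ.ker = ⊥ := by
        rw [Subgroup.eq_bot_iff_forall]
        intro x hx
        by_contra hx1
        apply htf x hx1
        haveI := hker
        have hford : IsOfFinOrder (⟨x, hx⟩ : φ.ker) := isOfFinOrder_of_finite _
        exact coe_finOrd hford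
      have hinj : Function.Injective φ := (MonoidHom.ker_eq_bot_iff φ).1 hkerbot
      exact ⟨MulEquiv.ofBijective φ ⟨hinj, hsurj⟩⟩
    · exfalso
      obtain ⟨g, hg⟩ := hsurj (DihedralGroup.sr 0)
      have hg1 : g ≠ 1 := by
        intro h
        rw [h, map_one, DihedralGroup.one_def] at hg
        cases hg
      have hg2 : g * g ∈ ψ.ker := by
        rw [MonoidHom.mem_ker, map_mul, hg, DihedralGroup.sr_mul_sr]
        rw [DihedralGroup.one_def]
        norm_num
      haveI := hker
      have hford : IsOfFinOrder (⟨g * g, hg2⟩ : ψ.ker) := isOfFinOrder_of_finite _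
      have hford2 : IsOfFinOrder (g * g) := coe_finOrd hford
      have hford3 : IsOfFinOrder g := by
        have : g * g = g ^ 2 := (sq g).symm
        rw [this] at hford2
        exact hford2.of_pow two_ne_zero
      exact htf g hg1 hford3
end
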